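/- Let T > 0 and let α, β, λ, ε, μ > 0 satisfy λ ≥ α + εμ/(4β). Let χ : [0,T] → ℝ³ be differentiable, χ̇ₛ : [0,T] → ℝ³, h : ℝ³ × ℝ → ℝ differentiable, and V : [0,T] → ℝ differentiable with V(t) ≥ β‖χ'(t) − χ̇ₛ(t)‖², V'(t) ≤ −λ V(t), and ⟨∇_χ h(χ(t),t), χ̇ₛ(t)⟩ + ∂ₜh(χ(t),t) ≥ −α h(χ(t),t) + (1/ε)‖∇_χ h(χ(t),t)‖² for all t ∈ [0,T]. If h(χ(0),0) − (1/μ)V(0) ≥ 0, then h(χ(t),t) ≥ 0 for all t ∈ [0,T]. -/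

import Mathlib

open scoped RealInnerProductSpace

/-- Corollary to Theorem 1: safety (nonnegativity of the safety function value
`h(χ(t),t)`) of the full-order trajectory over the horizon `[0,T]`. -/
theorem full_order_safety_corollary
    (T α β lam ε μ : ℝ)
    (hT : 0 < T) (hα : 0 < α) (hβ : 0 < β) (hlam : 0 < lam) (hε : 0 < ε) (hμ : 0 < μ)
    (hparam : lam ≥ α + ε * μ / (4 * β))
    (χ χs : ℝ → EuclideanSpace ℝ (Fin 3))
    (h : EuclideanSpace ℝ (Fin 3) × ℝ → ℝ)
    (V : ℝ → ℝ)
    (hχ : ∀ t ∈ Set.Icc (0 : ℝ) T, DifferentiableAt ℝ χ t)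
    (hh : Differentiable ℝ h)
    (hV : ∀ t ∈ Set.Icc (0 : ℝ) T, DifferentiableAt ℝ V t)
    (hVlb : ∀ t ∈ Set.Icc (0 : ℝ) T, V t ≥ β * ‖deriv χ t - χs t‖ ^ 2)
    (hVdecay : ∀ t ∈ Set.Icc (0 : ℝ) T, deriv V t ≤ -lam * V t)
    (hISSf : ∀ t ∈ Set.Icc (0 : ℝ) T,
      ⟪gradient (fun x => h (x, t)) (χ t), χs t⟫ + deriv (fun s => h (χ t, s)) t
        ≥ -α * h (χ t, t) + (1 / ε) * ‖gradient (fun x => h (x, t)) (χ t)‖ ^ 2)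
    (hB0 : h (χ 0, 0) - (1 / μ) * V 0 ≥ 0) :
    ∀ t ∈ Set.Icc (0 : ℝ) T, h (χ t, t) ≥ 0 := by
  -- The barrier function
  set B : ℝ → ℝ := fun t => h (χ t, t) - (1 / μ) * V t with hBdef
  -- V is nonnegative on the horizon
  have hVnn : ∀ t ∈ Set.Icc (0 : ℝ) T, 0 ≤ V t := by
    intro t ht
    have := hVlb t ht
    nlinarith [sq_nonneg ‖deriv χ t - χs t‖, hβ]
  -- Derivative of the composite map and the barrier inequality
  have hBderiv : ∀ t ∈ Set.Icc (0 : ℝ) T, ∃ d, HasDerivAt B d t ∧ -α * B t ≤ d := by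
    intro t ht
    set L := fderiv ℝ h (χ t, t) with hL
    have hγ : HasDerivAt (fun s => (χ s, s)) (deriv χ t, 1) t :=
      (hχ t ht).hasDerivAt.prodMk (hasDerivAt_id t)
    have hφ : HasDerivAt (fun s => h (χ s, s)) (L (deriv χ t, 1)) t := by
      have := HasFDerivAt.comp_hasDerivAt t (hh _).hasFDerivAt hγ
      exact this
    -- partial derivative in x gives the gradient
    have h1 : HasFDerivAt (fun x => h (x, t))
        (L.comp ((ContinuousLinearMap.id ℝ _).prod 0)) (χ t) :=
      (hh (χ t, t)).hasFDerivAt.comp (χ t) ((hasFDerivAt_id _).prodMk (hasFDerivAt_const _ _))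
    have hgrad : ∀ v, ⟪gradient (fun x => h (x, t)) (χ t), v⟫ = L (v, 0) := by
      intro v
      have := h1.fderiv
      simp only [gradient, this]
      rw [InnerProductSpace.toDual_symm_apply]
      simp
    -- partial derivative in time
    have h2 : HasDerivAt (fun s => h (χ t, s)) (L (0, 1)) t := by
      have := HasFDerivAt.comp_hasDerivAt t (hh _).hasFDerivAt
        ((hasDerivAt_const t (χ t)).prodMk (hasDerivAt_id t))
      exact this
    have h2' : deriv (fun s => h (χ t, s)) t = L (0, 1) := h2.deriv
    have hsplit : L (deriv χ t, 1) = L (χs t, 0) + L (deriv χ t - χs t, 0) + L (0, 1) := by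
      rw [← map_add, ← map_add]
      norm_num
    refine ⟨L (deriv χ t, 1) - (1 / μ) * deriv V t,
      (hφ.sub (((hV t ht).hasDerivAt).const_mul (1 / μ))), ?_⟩
    -- now the inequality
    set G := gradient (fun x => h (x, t)) (χ t) with hG
    set a := ‖G‖
    set b := ‖deriv χ t - χs t‖
    have hiss := hISSf t ht
    rw [h2'] at hiss
    have hGd : ⟪G, χs t⟫ = L (χs t, 0) := hgrad _
    have hGe : ⟪G, deriv χ t - χs t⟫ = L (deriv χ t - χs t, 0) := hgrad _
    have hcs : -(a * b) ≤ L (deriv χ t - χs t, 0) := by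
      rw [← hGe]
      have := abs_real_inner_le_norm G (deriv χ t - χs t)
      have := neg_abs_le ⟪G, deriv χ t - χs t⟫
      linarith
    have hVd := hVdecay t ht
    have hvlb := hVlb t ht
    have hvnn := hVnn t ht
    -- parameter inequality: ((lam - α)/μ) * V ≥ (ε/(4β)) * V
    have h6 : ε / (4 * β) ≤ (lam - α) / μ := by
      rw [div_le_div_iff₀ (by positivity) hμ]
      have : ε * μ / (4 * β) ≤ lam - α := by linarith
      calc ε * μ = (ε * μ / (4 * β)) * (4 * β) := by field_simp
        _ ≤ (lam - α) * (4 * β) := by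
            apply mul_le_mul_of_nonneg_right this (by positivity)
    have A5 : ε / (4 * β) * V t ≤ (lam - α) / μ * V t :=
      mul_le_mul_of_nonneg_right h6 hvnn
    have A6 : (ε / 4) * b ^ 2 ≤ ε / (4 * β) * V t := by
      have h7 : ε / (4 * β) * (β * b ^ 2) ≤ ε / (4 * β) * V t :=
        mul_le_mul_of_nonneg_left hvlb (by positivity)
      have h8 : ε / (4 * β) * (β * b ^ 2) = (ε / 4) * b ^ 2 := by
        field_simp
      linarith
    have A7 : (0 : ℝ) ≤ (1 / ε) * a ^ 2 - a * b + (ε / 4) * b ^ 2 := by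
      have h9 : (1 / ε) * a ^ 2 - a * b + (ε / 4) * b ^ 2 = (2 * a - ε * b) ^ 2 / (4 * ε) := by
        field_simp
        ring
      rw [h9]
      positivity
    have A4 : (1 / μ) * deriv V t ≤ (1 / μ) * (-lam * V t) :=
      mul_le_mul_of_nonneg_left hVd (by positivity)
    have hBt : B t = h (χ t, t) - (1 / μ) * V t := rfl
    rw [hBt, hsplit, ← hGd]
    have expand1 : (lam - α) / μ * V t = (1 / μ) * (lam * V t) - α * ((1 / μ) * V t) := by
      ring
    linarith [hiss, hcs, A4, A5, A6, A7, expand1]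
  -- Grönwall-type argument: g t = B t * exp (α t) is monotone
  set g : ℝ → ℝ := fun t => B t * Real.exp (α * t) with hgdef
  have hgmono : MonotoneOn g (Set.Icc 0 T) := by
    apply monotoneOn_of_deriv_nonneg (convex_Icc 0 T)
    · -- continuity
      intro t ht
      obtain ⟨d, hd, -⟩ := hBderiv t ht
      exact ((hd.continuousAt.mul (Real.continuous_exp.comp
        (continuous_const.mul continuous_id)).continuousAt)).continuousWithinAt
    · -- differentiability on the interior
      intro t ht
      have ht' : t ∈ Set.Icc (0 : ℝ) T := interior_subset ht
      obtain ⟨d, hd, -⟩ := hBderiv t ht'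
      have hexp : HasDerivAt (fun s => Real.exp (α * s)) (Real.exp (α * t) * α) t := by
        simpa using ((hasDerivAt_id t).const_mul α).exp
      exact (hd.mul hexp).differentiableAt.differentiableWithinAt
    · -- nonnegative derivative on the interior
      intro t ht
      have ht' : t ∈ Set.Icc (0 : ℝ) T := interior_subset ht
      obtain ⟨d, hd, hineq⟩ := hBderiv t ht'
      have hexp : HasDerivAt (fun s => Real.exp (α * s)) (Real.exp (α * t) * α) t := by
        simpa using ((hasDerivAt_id t).const_mul α).exp
      have hg' : HasDerivAt g (d * Real.exp (α * t) + B t * (Real.exp (α * t) * α)) t :=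
        hd.mul hexp
      rw [hg'.deriv]
      have hE : (0 : ℝ) < Real.exp (α * t) := Real.exp_pos _
      have h10 : 0 ≤ (d + α * B t) * Real.exp (α * t) :=
        mul_nonneg (by linarith) hE.le
      nlinarith
  -- B is nonnegative on the horizon
  have hBnn : ∀ t ∈ Set.Icc (0 : ℝ) T, 0 ≤ B t := by
    intro t ht
    have h0 : (0 : ℝ) ∈ Set.Icc (0 : ℝ) T := ⟨le_refl 0, hT.le⟩
    have hg0 : g 0 = B 0 := by simp [hgdef]
    have hB0' : 0 ≤ B 0 := hB0
    by_contra hneg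
    push_neg at hneg
    have : g t < 0 := mul_neg_of_neg_of_pos hneg (Real.exp_pos _)
    have hge : g 0 ≤ g t := hgmono h0 ht ht.1
    rw [hg0] at hge
    linarith
  intro t ht
  have hb := hBnn t ht
  have hv := hVnn t ht
  have : 0 ≤ (1 / μ) * V t := mul_nonneg (by positivity) hv
  have hBt : B t = h (χ t, t) - (1 / μ) * V t := rfl
  linarith [hBt ▸ hb]
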